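/- Let Ω ⊂ ℝ be a bounded open interval, p > 0, q > 0, and let φ ∈ C¹(closure Ω) be positive on closure Ω. Then ∫_Ω φ^{-p} ≤ q^{2p/q} |Ω|^{(p+q)/q} (∫_Ω φ^{-q-2} (φ')²)^{p/q} + 2^{2p/q} |Ω|^{p+1} (∫_Ω φ)^{-p}. -/

import Mathlib

open Set MeasureTheory Real

lemma aux_add_rpow (A B r : ℝ) (hA : 0 ≤ A) (hB : 0 ≤ B) (hr : 0 ≤ r) :
    (A + B) ^ r ≤ 2 ^ r * (A ^ r + B ^ r) := by
  have h1 : A + B ≤ 2 * max A B := by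
    rcases le_total A B with h | h
    · simp [max_eq_right h]; linarith
    · simp [max_eq_left h]; linarith
  have h2 : (A + B) ^ r ≤ (2 * max A B) ^ r :=
    Real.rpow_le_rpow (by linarith) h1 hr
  have h3 : (2 * max A B) ^ r = 2 ^ r * (max A B) ^ r :=
    Real.mul_rpow (by norm_num) (le_max_of_le_left hA)
  have h4 : (max A B) ^ r ≤ A ^ r + B ^ r := by
    rcases le_total A B with h | h
    · rw [max_eq_right h]; nlinarith [Real.rpow_nonneg hA r]
    · rw [max_eq_left h]; nlinarith [Real.rpow_nonneg hB r]
  calc (A + B) ^ r ≤ 2 ^ r * (max A B) ^ r := by rw [← h3]; exact h2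
    _ ≤ 2 ^ r * (A ^ r + B ^ r) := by
        have : (0:ℝ) ≤ 2 ^ r := Real.rpow_nonneg (by norm_num) r
        nlinarith

theorem stmt_7 (a b : ℝ) (hab : a < b) (p q : ℝ) (hp : 0 < p) (hq : 0 < q)
    (φ : ℝ → ℝ) (hφ : ContDiffOn ℝ 1 φ (Set.Icc a b))
    (hpos : ∀ x ∈ Set.Icc a b, 0 < φ x) :
    ∫ x in Set.Ioo a b, φ x ^ (-p)
      ≤ q ^ (2*p/q) * (b - a) ^ ((p + q)/q)
          * (∫ x in Set.Ioo a b, φ x ^ (-q - 2) * (deriv φ x) ^ 2) ^ (p/q)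
        + 2 ^ (2*p/q) * (b - a) ^ (p + 1) * (∫ x in Set.Ioo a b, φ x) ^ (-p) := by
  have hab' : a ≤ b := hab.le
  have hba : (0:ℝ) < b - a := by linarith
  have hφc : ContinuousOn φ (Set.Icc a b) := hφ.continuousOn
  set g : ℝ → ℝ := derivWithin φ (Set.Icc a b) with hgdef
  have hgc : ContinuousOn g (Set.Icc a b) :=
    hφ.continuousOn_derivWithin (uniqueDiffOn_Icc hab) le_rfl
  have hmem : ∀ y ∈ Set.Ioo a b, Set.Icc a b ∈ nhds y := fun y hy =>
    Filter.mem_of_superset (isOpen_Ioo.mem_nhds hy) Set.Ioo_subset_Icc_self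
  have hder : ∀ y ∈ Set.Ioo a b, HasDerivAt φ (g y) y := by
    intro y hy
    have hdiff : DifferentiableAt ℝ φ y :=
      ((hφ.differentiableOn one_ne_zero) y (Set.Ioo_subset_Icc_self hy)).differentiableAt (hmem y hy)
    have hgy : g y = deriv φ y := derivWithin_of_mem_nhds (hmem y hy)
    rw [hgy]; exact hdiff.hasDerivAt
  -- volume of Ioo
  have hvol : (volume (Set.Ioo a b)).toReal = b - a := by
    simp [Real.volume_Ioo, ENNReal.toReal_ofReal hba.le]
  set I : ℝ := ∫ x in Set.Ioo a b, φ x with hIdef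
  set J : ℝ := ∫ x in Set.Ioo a b, φ x ^ (-q - 2) * (deriv φ x) ^ 2 with hJdef
  set r : ℝ := 2*p/q with hrdef
  have hr : 0 < r := by positivity
  -- integrability of φ on Ioo and positivity of I
  have hφint : IntegrableOn φ (Set.Ioo a b) volume :=
    (hφc.integrableOn_Icc).mono_set Set.Ioo_subset_Icc_self
  -- max point
  obtain ⟨x₀, hx₀, hmax⟩ := isCompact_Icc.exists_isMaxOn (Set.nonempty_Icc.2 hab') hφc
  have hφx₀ : 0 < φ x₀ := hpos x₀ hx₀
  have hIle : I ≤ (b - a) * φ x₀ := by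
    have := setIntegral_mono_on hφint (integrableOn_const measure_Ioo_lt_top.ne) measurableSet_Ioo
      (fun x hx => hmax (Set.Ioo_subset_Icc_self hx))
    simpa [Real.volume_Ioo, ENNReal.toReal_ofReal hba.le, mul_comm, max_eq_left hba.le] using this
  have hIpos : 0 < I := by
    obtain ⟨x₁, hx₁, hmin⟩ := isCompact_Icc.exists_isMinOn (Set.nonempty_Icc.2 hab') hφc
    have hm : 0 < φ x₁ := hpos x₁ hx₁
    have h1 : (b - a) * φ x₁ ≤ I := by
      have := setIntegral_mono_on (integrableOn_const measure_Ioo_lt_top.ne) hφint measurableSet_Ioo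
        (fun x hx => hmin (Set.Ioo_subset_Icc_self hx))
      simpa [Real.volume_Ioo, ENNReal.toReal_ofReal hba.le, mul_comm, max_eq_left hba.le] using this
    nlinarith
  -- auxiliary functions
  set ψ : ℝ → ℝ := fun y => φ y ^ (-(q/2)) with hψdef
  set h' : ℝ → ℝ := fun y => g y * (-(q/2)) * φ y ^ (-(q/2) - 1) with hh'def
  have hψc : ContinuousOn ψ (Set.Icc a b) :=
    hφc.rpow_const (fun x hx => Or.inl (hpos x hx).ne')
  have hh'c : ContinuousOn h' (Set.Icc a b) :=
    (hgc.mul continuousOn_const).mul (hφc.rpow_const (fun x hx => Or.inl (hpos x hx).ne'))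
  have hψder : ∀ y ∈ Set.Ioo a b, HasDerivAt ψ (h' y) y := fun y hy =>
    (hder y hy).rpow_const (Or.inl (hpos y (Set.Ioo_subset_Icc_self hy)).ne')
  set Lh : ℝ := ∫ y in Set.Ioo a b, |h' y| with hLhdef
  have hLhint : IntegrableOn (fun y => |h' y|) (Set.Ioo a b) volume :=
    (hh'c.abs.integrableOn_Icc).mono_set Set.Ioo_subset_Icc_self
  have hLhnonneg : 0 ≤ Lh :=
    setIntegral_nonneg measurableSet_Ioo (fun x _ => abs_nonneg _)
  -- FTC step
  have hFTC : ∀ x ∈ Set.Ioo a b, ψ x ≤ ψ x₀ + Lh := by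
    intro x hx
    set c := min x x₀ with hc
    set d := max x x₀ with hd
    have hac : a ≤ c := le_min hx.1.le hx₀.1
    have hdb : d ≤ b := max_le hx.2.le hx₀.2
    have hcd : c ≤ d := min_le_max
    have hsub : Set.Icc c d ⊆ Set.Icc a b := Set.Icc_subset_Icc hac hdb
    have hint : IntervalIntegrable h' volume c d :=
      ContinuousOn.intervalIntegrable (hh'c.mono (by rw [Set.uIcc_of_le hcd]; exact hsub))
    have hFTC0 : ∫ y in c..d, h' y = ψ d - ψ c :=
      intervalIntegral.integral_eq_sub_of_hasDerivAt_of_le hcd (hψc.mono hsub)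
        (fun y hy => hψder y ⟨lt_of_le_of_lt hac hy.1, lt_of_lt_of_le hy.2 hdb⟩) hint
    have h1 : ψ x - ψ x₀ ≤ |ψ d - ψ c| := by
      rcases le_total x x₀ with h | h
      · rw [hc, hd, min_eq_left h, max_eq_right h, abs_sub_comm]
        exact le_abs_self _
      · rw [hc, hd, min_eq_right h, max_eq_left h]
        exact le_abs_self _
    have h2 : |∫ y in c..d, h' y| ≤ ∫ y in c..d, |h' y| :=
      intervalIntegral.abs_integral_le_integral_abs hcd
    have h3 : ∫ y in c..d, |h' y| ≤ Lh := by
      rw [intervalIntegral.integral_of_le hcd]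
      apply setIntegral_mono_set hLhint
        (Filter.Eventually.of_forall (fun y => abs_nonneg _))
      rw [MeasureTheory.ae_le_set]
      apply measure_mono_null (t := {b}) _ (measure_singleton b)
      intro y hy
      have h4 : a < y := lt_of_le_of_lt hac hy.1.1
      have h5 : y ≤ b := le_trans hy.1.2 hdb
      have h6 : ¬ (a < y ∧ y < b) := hy.2
      simp only [Set.mem_singleton_iff]
      rcases lt_or_eq_of_le h5 with h | h
      · exact absurd ⟨h4, h⟩ h6
      · exact h
    rw [← hFTC0] at h1
    have := le_trans h1 (le_trans h2 h3)
    linarith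
  -- Cauchy-Schwarz step
  set u : ℝ → ℝ := fun y => φ y ^ (-(q/2) - 1) * |g y| with hudef
  have hucont : ContinuousOn u (Set.Icc a b) :=
    (hφc.rpow_const (fun x hx => Or.inl (hpos x hx).ne')).mul hgc.abs
  have hunn : 0 ≤ᵐ[volume.restrict (Set.Ioo a b)] u := by
    apply (ae_restrict_iff' measurableSet_Ioo).2
    apply Filter.Eventually.of_forall
    intro y hy
    have hφy : 0 < φ y := hpos y (Set.Ioo_subset_Icc_self hy)
    simp only [hudef]
    positivity
  have hJeq : ∫ y in Set.Ioo a b, u y ^ (2:ℝ) = J := by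
    rw [hJdef]
    apply setIntegral_congr_fun measurableSet_Ioo
    intro y hy
    have hφy : 0 < φ y := hpos y (Set.Ioo_subset_Icc_self hy)
    have hgy : deriv φ y = g y := (derivWithin_of_mem_nhds (hmem y hy)).symm
    show u y ^ (2:ℝ) = φ y ^ (-q - 2) * deriv φ y ^ 2
    have h2 : u y ^ (2:ℝ) = (u y) ^ (2:ℕ) := by
      rw [← Real.rpow_natCast (u y) 2]; norm_num
    have h3 : (φ y ^ (-(q/2) - 1)) ^ (2:ℕ) = φ y ^ (-q - 2) := by
      rw [← Real.rpow_natCast (φ y ^ (-(q/2) - 1)) 2, ← Real.rpow_mul hφy.le]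
      congr 1
      push_cast
      ring
    rw [h2]
    simp only [hudef]
    rw [mul_pow, sq_abs, h3, hgy]
  have hCS : Lh ≤ (q/2) * ((b - a) ^ ((1:ℝ)/2) * J ^ ((1:ℝ)/2)) := by
    have habs : ∀ y ∈ Set.Ioo a b, |h' y| = (q/2) * u y := by
      intro y hy
      have hφy : 0 < φ y ^ (-(q/2) - 1) :=
        Real.rpow_pos_of_pos (hpos y (Set.Ioo_subset_Icc_self hy)) _
      simp only [hh'def, hudef, abs_mul, abs_neg, abs_of_pos hφy,
        abs_of_nonneg (by positivity : (0:ℝ) ≤ q/2)]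
      ring
    have hLheq : Lh = (q/2) * ∫ y in Set.Ioo a b, u y := by
      rw [hLhdef, setIntegral_congr_fun measurableSet_Ioo habs, integral_const_mul]
    have hfin : IsFiniteMeasure (volume.restrict (Set.Ioo a b)) :=
      ⟨by rw [Measure.restrict_apply_univ]; exact measure_Ioo_lt_top⟩
    have humeas : AEStronglyMeasurable u (volume.restrict (Set.Ioo a b)) :=
      (hucont.mono Set.Ioo_subset_Icc_self).aestronglyMeasurable measurableSet_Ioo
    obtain ⟨C, hC⟩ := isCompact_Icc.exists_bound_of_continuousOn hucont
    have humem : MemLp u (ENNReal.ofReal 2) (volume.restrict (Set.Ioo a b)) :=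
      MemLp.of_bound humeas C ((ae_restrict_iff' measurableSet_Ioo).2
        (Filter.Eventually.of_forall (fun y hy => hC y (Set.Ioo_subset_Icc_self hy))))
    have h1mem : MemLp (fun _ : ℝ => (1:ℝ)) (ENNReal.ofReal 2) (volume.restrict (Set.Ioo a b)) :=
      memLp_const 1
    have hpq2 : (2:ℝ).HolderConjugate 2 := Real.HolderConjugate.two_two
    have hH := integral_mul_le_Lp_mul_Lq_of_nonneg hpq2
      (Filter.Eventually.of_forall (fun _ => zero_le_one))
      hunn h1mem humem
    simp only [one_mul, Real.one_rpow] at hH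
    rw [integral_const] at hH
    rw [hJeq] at hH
    rw [hLheq]
    have hmeasH : (volume.restrict (Set.Ioo a b)) Set.univ = ENNReal.ofReal (b - a) := by
      rw [Measure.restrict_apply_univ, Real.volume_Ioo]
    rw [Measure.real, hmeasH, ENNReal.toReal_ofReal hba.le, smul_eq_mul, mul_one] at hH
    have : 0 ≤ q/2 := by positivity
    calc (q/2) * ∫ y in Set.Ioo a b, u y
        ≤ (q/2) * ((b - a) ^ ((1:ℝ)/2) * J ^ ((1:ℝ)/2)) := by
          apply mul_le_mul_of_nonneg_left _ this
          simpa [one_div] using hH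
      _ = (q/2) * ((b - a) ^ ((1:ℝ)/2) * J ^ ((1:ℝ)/2)) := rfl
  have hJ0 : 0 ≤ J := by
    apply setIntegral_nonneg measurableSet_Ioo
    intro x hx
    have := hpos x (Set.Ioo_subset_Icc_self hx)
    positivity
  -- pointwise bound
  have hpt : ∀ x ∈ Set.Ioo a b, φ x ^ (-p) ≤ 2 ^ r * (φ x₀ ^ (-p) + Lh ^ r) := by
    intro x hx
    have hφx : 0 < φ x := hpos x (Set.Ioo_subset_Icc_self hx)
    have hexp : -(q/2) * r = -p := by rw [hrdef]; field_simp
    have e1 : φ x ^ (-p) = (ψ x) ^ r := by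
      simp only [hψdef]
      rw [← Real.rpow_mul hφx.le, hexp]
    have e2 : (ψ x₀) ^ r = φ x₀ ^ (-p) := by
      simp only [hψdef]
      rw [← Real.rpow_mul hφx₀.le, hexp]
    calc φ x ^ (-p) = (ψ x) ^ r := e1
      _ ≤ (ψ x₀ + Lh) ^ r := by
          apply Real.rpow_le_rpow _ (hFTC x hx) hr.le
          simp only [hψdef]
          exact Real.rpow_nonneg hφx.le _
      _ ≤ 2 ^ r * ((ψ x₀) ^ r + Lh ^ r) := by
          apply aux_add_rpow _ _ _ _ hLhnonneg hr.le
          simp only [hψdef]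
          exact Real.rpow_nonneg hφx₀.le _
      _ = 2 ^ r * (φ x₀ ^ (-p) + Lh ^ r) := by rw [e2]
  -- integrate
  have hint1 : ∫ x in Set.Ioo a b, φ x ^ (-p)
      ≤ (b - a) * (2 ^ r * (φ x₀ ^ (-p) + Lh ^ r)) := by
    have hintp : IntegrableOn (fun x => φ x ^ (-p)) (Set.Ioo a b) volume :=
      ((hφc.rpow_const (fun x hx => Or.inl (hpos x hx).ne')).integrableOn_Icc).mono_set
        Set.Ioo_subset_Icc_self
    have := setIntegral_mono_on hintp
      (integrableOn_const measure_Ioo_lt_top.ne) measurableSet_Ioo hpt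
    simpa [Real.volume_Ioo, ENNReal.toReal_ofReal hba.le, mul_comm, max_eq_left hba.le] using this
  -- bound on φ x₀ ^ (-p)
  have hA : φ x₀ ^ (-p) ≤ (b - a) ^ p * I ^ (-p) := by
    have h1 : I / (b - a) ≤ φ x₀ := by rw [div_le_iff₀ hba]; linarith
    have h2 : φ x₀ ^ (-p) ≤ (I / (b - a)) ^ (-p) :=
      Real.rpow_le_rpow_of_nonpos (by positivity) h1 (neg_nonpos.2 hp.le)
    have e : (I / (b - a)) ^ (-p) = (b - a) ^ p * I ^ (-p) := by
      rw [Real.div_rpow hIpos.le hba.le, Real.rpow_neg hba.le, div_eq_mul_inv, inv_inv, mul_comm]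
    linarith [e ▸ h2]
  -- bound on Lh ^ r
  have hB : Lh ^ r ≤ (q/2) ^ r * ((b - a) ^ (p/q) * J ^ (p/q)) := by
    have h1 := Real.rpow_le_rpow hLhnonneg hCS hr.le
    have e : ((q/2) * ((b - a) ^ ((1:ℝ)/2) * J ^ ((1:ℝ)/2))) ^ r
        = (q/2) ^ r * ((b - a) ^ (p/q) * J ^ (p/q)) := by
      rw [Real.mul_rpow (by positivity) (by positivity),
        Real.mul_rpow (by positivity) (Real.rpow_nonneg hJ0 _),
        ← Real.rpow_mul hba.le, ← Real.rpow_mul hJ0]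
      have he : (1:ℝ)/2 * r = p/q := by rw [hrdef]; field_simp
      rw [he]
    rw [e] at h1
    exact h1
  -- assemble
  calc ∫ x in Set.Ioo a b, φ x ^ (-p)
      ≤ (b - a) * (2 ^ r * (φ x₀ ^ (-p) + Lh ^ r)) := hint1
    _ ≤ (b - a) * (2 ^ r * (((b - a) ^ p * I ^ (-p)) + (q/2) ^ r * ((b - a) ^ (p/q) * J ^ (p/q)))) := by
        have h2r : (0:ℝ) ≤ 2 ^ r := Real.rpow_nonneg (by norm_num) r
        nlinarith [hA, hB, mul_le_mul_of_nonneg_left (add_le_add hA hB) h2r,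
          mul_le_mul_of_nonneg_left (mul_le_mul_of_nonneg_left (add_le_add hA hB) h2r) hba.le]
    _ = q ^ r * (b - a) ^ ((p + q)/q) * J ^ (p/q) + 2 ^ r * (b - a) ^ (p + 1) * I ^ (-p) := by
        have e1 : q ^ r = 2 ^ r * (q/2) ^ r := by
          rw [← Real.mul_rpow (by norm_num) (by positivity)]
          congr 1
          ring
        have e2 : (b - a) ^ ((p + q)/q) = (b - a) * (b - a) ^ (p/q) := by
          have : (p + q)/q = 1 + p/q := by field_simp; ring
          rw [this, Real.rpow_add hba, Real.rpow_one]
        have e3 : (b - a) ^ (p + 1) = (b - a) ^ p * (b - a) := by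
          rw [Real.rpow_add hba, Real.rpow_one]
        rw [e1, e2, e3]; ring
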